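/- Let g and h be finitary permutations of ℕ and let k ∈ ℕ. Then there exist h₁, h₂ ∈ S∞[k] with h = h₁ ∘ g ∘ h₂ if and only if for all i, j < k one has g(i) = j ⇔ h(i) = j. Consequently, the map assigning to g its upper-left k × k corner (the 0-1-matrix with entry 1 in position (i, j), i, j < k, exactly when g(j) = i) induces an injection of the double coset space S∞[k]\S∞/S∞[k] into the set of k × k 0-1-matrices. -/

import Mathlib

private lemma exists_perm_extend (n : ℕ) :
    ∀ (s t : Finset ℕ) (f : ℕ → ℕ), s.card = n → Set.BijOn f s t →
    ∃ π : Equiv.Perm ℕ, (∀ x ∈ s, π x = f x) ∧ ∀ x, x ∉ s → x ∉ t → π x = x := by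
  induction n with
  | zero =>
    intro s t f hcard _
    refine ⟨1, ?_, fun x _ _ => rfl⟩
    intro x hx
    simp [Finset.card_eq_zero.mp hcard] at hx
  | succ n ih =>
    intro s t f hcard hbij
    obtain ⟨a, ha⟩ : ∃ a, a ∈ s := Finset.card_pos.mp (by omega)
    have hb : f a ∈ t := hbij.mapsTo ha
    set s' := s.erase a with hs'
    set t' := t.erase (f a) with ht'
    have hbij' : Set.BijOn f s' t' := by
      refine ⟨?_, hbij.injOn.mono ?_, ?_⟩
      · intro x hx
        simp only [hs', ht', Finset.coe_erase, Set.mem_diff, Set.mem_singleton_iff] at hx ⊢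
        exact ⟨hbij.mapsTo hx.1, fun hfx => hx.2 (hbij.injOn hx.1 ha hfx)⟩
      · intro x hx
        simp only [hs', Finset.coe_erase, Set.mem_diff] at hx
        exact hx.1
      · intro y hy
        simp only [ht', Finset.coe_erase, Set.mem_diff, Set.mem_singleton_iff] at hy
        obtain ⟨x, hx, hfx⟩ := hbij.surjOn hy.1
        refine ⟨x, ?_, hfx⟩
        simp only [hs', Finset.coe_erase, Set.mem_diff, Set.mem_singleton_iff]
        exact ⟨hx, fun hxa => hy.2 (by rw [← hfx, hxa])⟩
    obtain ⟨π', h1, h2⟩ := ih s' t' f (by rw [hs', Finset.card_erase_of_mem ha, hcard]; omega) hbij'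
    set c := π'.symm (f a) with hc
    have hπc : π' c = f a := by simp [hc]
    have hcs' : c ∉ s' := by
      intro hcs
      have h3 := h1 c hcs
      rw [hπc] at h3
      have : f c ∈ (t' : Set ℕ) := hbij'.mapsTo (by exact_mod_cast hcs)
      rw [← h3] at this
      simp [ht'] at this
    have hct : c ∈ t := by
      by_cases hct' : c ∈ t'
      · exact Finset.mem_of_mem_erase hct'
      · have := h2 c hcs' hct'
        rw [hπc] at this
        rw [← this]
        exact hb
    refine ⟨π' * Equiv.swap a c, ?_, ?_⟩
    · intro x hx
      by_cases hxa : x = a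
      · subst hxa
        simp [Equiv.Perm.mul_apply, Equiv.swap_apply_left, hπc]
      · have hxs' : x ∈ s' := Finset.mem_erase.mpr ⟨hxa, hx⟩
        have hxc : x ≠ c := fun hxc => hcs' (hxc ▸ hxs')
        simp [Equiv.Perm.mul_apply, Equiv.swap_apply_of_ne_of_ne hxa hxc, h1 x hxs']
    · intro x hxs hxt
      have hxa : x ≠ a := fun hxa => hxs (hxa ▸ ha)
      have hxc : x ≠ c := fun hxc => hxt (hxc ▸ hct)
      have hxs' : x ∉ s' := fun hx => hxs (Finset.mem_of_mem_erase hx)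
      have hxt' : x ∉ t' := fun hx => hxt (Finset.mem_of_mem_erase hx)
      simp [Equiv.Perm.mul_apply, Equiv.swap_apply_of_ne_of_ne hxa hxc, h2 x hxs' hxt']

/-- **Lemma 2.2 (double cosets and 0-1-matrices)**: two finitary permutations `g`, `h`
of `ℕ` lie in the same `(S∞[k], S∞[k])`-double coset if and only if they have the same
upper-left `k × k` corner, i.e. `g i = j ⇔ h i = j` for all `i, j < k`. Hence the
upper-left corner induces an injection of `S∞[k]\S∞/S∞[k]` into `k × k` 0-1-matrices. -/
theorem double_coset_iff_same_corner (g h : Equiv.Perm ℕ)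
    (hg : {x | g x ≠ x}.Finite) (hh : {x | h x ≠ x}.Finite) (k : ℕ) :
    (∃ h₁ h₂ : Equiv.Perm ℕ,
        {x | h₁ x ≠ x}.Finite ∧ {x | h₂ x ≠ x}.Finite ∧
        (∀ x < k, h₁ x = x) ∧ (∀ x < k, h₂ x = x) ∧
        h = h₁ * g * h₂) ↔
    (∀ i < k, ∀ j < k, (g i = j ↔ h i = j)) := by
  classical
  constructor
  · rintro ⟨h₁, h₂, _, _, hf1, hf2, heq⟩ i hi j hj
    have key : h i = h₁ (g i) := by
      rw [heq]; simp [Equiv.Perm.mul_apply, hf2 i hi]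
    constructor
    · intro hgi; rw [key, hgi, hf1 j hj]
    · intro hhi
      rw [key] at hhi
      nth_rewrite 1 [← hf1 j hj] at hhi
      exact h₁.injective hhi
  · intro hcorner
    set s : Finset ℕ := hh.toFinset.filter (fun x => k ≤ x ∧ h x < k) with hsdef
    set t : Finset ℕ := hg.toFinset.filter (fun x => k ≤ x ∧ g x < k) with htdef
    have hmem_s : ∀ x, x ∈ s ↔ k ≤ x ∧ h x < k := by
      intro x
      simp only [hsdef, Finset.mem_filter, Set.Finite.mem_toFinset, Set.mem_setOf_eq]
      constructor
      · tauto
      · intro hx; exact ⟨by omega, hx⟩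
    have hmem_t : ∀ x, x ∈ t ↔ k ≤ x ∧ g x < k := by
      intro x
      simp only [htdef, Finset.mem_filter, Set.Finite.mem_toFinset, Set.mem_setOf_eq]
      constructor
      · tauto
      · intro hx; exact ⟨by omega, hx⟩
    set f : ℕ → ℕ := fun x => g.symm (h x) with hfdef
    have hgf : ∀ x, g (f x) = h x := fun x => g.apply_symm_apply (h x)
    have hbij : Set.BijOn f s t := by
      refine ⟨?_, ?_, ?_⟩
      · intro x hx
        rw [Finset.mem_coe, hmem_s] at hx
        rw [Finset.mem_coe, hmem_t]
        have hgfx : g (f x) < k := by rw [hgf]; exact hx.2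
        refine ⟨?_, hgfx⟩
        by_contra hlt
        push_neg at hlt
        have := (hcorner (f x) hlt (g (f x)) hgfx).mp rfl
        rw [hgf] at this
        have : f x = x := h.injective this
        omega
      · intro x _ y _ hxy
        exact h.injective (g.symm.injective hxy)
      · intro y hy
        rw [Finset.mem_coe, hmem_t] at hy
        refine ⟨h.symm (g y), ?_, ?_⟩
        · rw [Finset.mem_coe, hmem_s]
          have hhx : h (h.symm (g y)) = g y := h.apply_symm_apply (g y)
          refine ⟨?_, by rw [hhx]; exact hy.2⟩
          by_contra hlt
          push_neg at hlt
          have := (hcorner (h.symm (g y)) hlt (g y) hy.2).mpr hhx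
          have : h.symm (g y) = y := g.injective this
          omega
        · simp [hfdef]
    obtain ⟨π, hπ1, hπ2⟩ := exists_perm_extend s.card s t f rfl hbij
    have hπfin : {x | π x ≠ x}.Finite := by
      apply Set.Finite.subset (s ∪ t).finite_toSet
      intro x hx
      by_contra hx'
      simp only [Finset.coe_union, Set.mem_union, Finset.mem_coe] at hx'
      push_neg at hx'
      exact hx (hπ2 x hx'.1 hx'.2)
    refine ⟨h * π⁻¹ * g⁻¹, π, ?_, hπfin, ?_, ?_, by group⟩
    · apply Set.Finite.subset (hh.union (hπfin.union hg))
      intro x hx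
      by_contra hc
      simp only [Set.mem_union, Set.mem_setOf_eq] at hc
      push_neg at hc
      apply hx
      have hginv : g⁻¹ x = x := by
        have := hc.2.2
        exact g.injective (by simp [this])
      have hπinv : π⁻¹ x = x := by
        have := hc.2.1
        exact π.injective (by simp [this])
      simp only [Set.mem_setOf_eq, Equiv.Perm.mul_apply, hginv, hπinv, hc.1, not_not]
    · intro j hj
      have hy : g⁻¹ j = g.symm j := rfl
      simp only [Equiv.Perm.mul_apply]
      set y := g⁻¹ j with hydef
      have hgy : g y = j := g.apply_symm_apply j
      by_cases hyk : y < k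
      · have hhy : h y = j := (hcorner y hyk j hj).mp hgy
        have hπy : π y = y := by
          apply hπ2
          · rw [hmem_s]; omega
          · rw [hmem_t]; omega
        have : π⁻¹ y = y := π.injective (by simp [hπy])
        rw [this, hhy]
      · push_neg at hyk
        have hyt : y ∈ t := by rw [hmem_t]; exact ⟨hyk, by omega⟩
        obtain ⟨x, hxs, hfx⟩ := hbij.surjOn (Finset.mem_coe.mpr hyt)
        have hπx : π x = y := by rw [hπ1 x (Finset.mem_coe.mp hxs), hfx]
        have hπinvy : π⁻¹ y = x := π.injective (by simp [hπx])
        rw [hπinvy]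
        have : g (f x) = h x := hgf x
        rw [hfx] at this
        rw [← this, hgy]
    · intro x hx
      apply hπ2
      · rw [hmem_s]; omega
      · rw [hmem_t]; omega
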